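/- Let A, B be basic hoops and p : A → B, s : B → A homomorphisms with p ∘ s = id_B and with s a strong section, let X = {a ∈ A | p(a) = 1}, and let g_b(x) = s(b) → x for b ∈ B, x ∈ X. Then condition (B2) holds: for all b₁, b₂, b₃ ∈ B and x, y, z ∈ X, g_{b̃}( g_{b₃→(b₁→b₂)}( g_{b₂→b₁}(x → y) → z ) → ( g_{b₃→(b₂→b₁)}( g_{b₁→b₂}(y → x) → z ) → z ) ) = 1, where b̃ = ((((b₂ → b₁) → b₃) → b₃) → ((b₁ → b₂) → b₃)). -/
import Mathlib


class Hoop (α : Type*) extends CommMonoid α, HImp α where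
  himp_self : ∀ x : α, x ⇨ x = 1
  mul_himp_comm : ∀ x y : α, x * (x ⇨ y) = y * (y ⇨ x)
  mul_himp_assoc : ∀ x y z : α, (x * y) ⇨ z = x ⇨ (y ⇨ z)

/-- A basic hoop: a hoop satisfying `((x → y) → z) → (((y → x) → z) → z) = 1`. -/
class BasicHoop (α : Type*) extends Hoop α where
  basic : ∀ x y z : α, ((x ⇨ y) ⇨ z) ⇨ (((y ⇨ x) ⇨ z) ⇨ z) = 1

namespace StmtAux

variable {H : Type*} [Hoop H]

theorem imp_one (a b : H) : (a ⇨ b) ⇨ 1 = 1 := by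
  have e1 : (b * (b ⇨ a)) ⇨ a = 1 := by
    rw [mul_comm, Hoop.mul_himp_assoc, Hoop.himp_self]
  have e2 : (a * (a ⇨ b)) ⇨ a = (a ⇨ b) ⇨ 1 := by
    rw [mul_comm, Hoop.mul_himp_assoc, Hoop.himp_self]
  rw [← e2, Hoop.mul_himp_comm, e1]

theorem one_himp (a : H) : 1 ⇨ a = a := by
  have h2 : a ⇨ (1 ⇨ a) = 1 := by
    rw [← Hoop.mul_himp_assoc, mul_one, Hoop.himp_self]
  have hd2 : 1 ⇨ a = a * (a ⇨ 1) := by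
    have h := Hoop.mul_himp_comm (1 : H) a
    rwa [one_mul] at h
  have h3 : (1 ⇨ a) ⇨ a = 1 := by
    rw [hd2, mul_comm, Hoop.mul_himp_assoc, Hoop.himp_self]
    exact imp_one a 1
  have h4 := Hoop.mul_himp_comm a (1 ⇨ a)
  rw [h2, h3, mul_one, mul_one] at h4
  exact h4.symm

theorem himp_one (a : H) : a ⇨ 1 = 1 := by
  have h := imp_one (1 : H) a
  rwa [one_himp] at h

def Hle (a b : H) : Prop := a ⇨ b = 1

theorem hle_refl (a : H) : Hle a a := Hoop.himp_self a

theorem hle_of_eq {a b : H} (h : a = b) : Hle a b := h ▸ hle_refl a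

theorem K (a b c : H) : (a ⇨ b) ⇨ ((b ⇨ c) ⇨ (a ⇨ c)) = 1 := by
  have e : (a ⇨ b) * ((b ⇨ c) * a) = (b ⇨ a) * (b * (b ⇨ c)) := by
    calc (a ⇨ b) * ((b ⇨ c) * a) = (a * (a ⇨ b)) * (b ⇨ c) := by ac_rfl
    _ = (b * (b ⇨ a)) * (b ⇨ c) := by rw [Hoop.mul_himp_comm]
    _ = (b ⇨ a) * (b * (b ⇨ c)) := by ac_rfl
  have h1 : ((b ⇨ a) * (b * (b ⇨ c))) ⇨ c = 1 := by
    rw [Hoop.mul_himp_assoc]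
    have h0 : (b * (b ⇨ c)) ⇨ c = 1 := by
      rw [mul_comm, Hoop.mul_himp_assoc, Hoop.himp_self]
    rw [h0, himp_one]
  have h2 : ((a ⇨ b) * ((b ⇨ c) * a)) ⇨ c = (a ⇨ b) ⇨ ((b ⇨ c) ⇨ (a ⇨ c)) := by
    rw [Hoop.mul_himp_assoc, Hoop.mul_himp_assoc]
  rw [← h2, e, h1]

theorem hle_trans {a b c : H} (h1 : Hle a b) (h2 : Hle b c) : Hle a c := by
  have h := K a b c
  rw [h1, one_himp, h2, one_himp] at h
  exact h

theorem mul_hle_left (a b : H) : Hle (a * b) a := by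
  show (a * b) ⇨ a = 1
  rw [mul_comm, Hoop.mul_himp_assoc, Hoop.himp_self, himp_one]

theorem mul_hle_right (a b : H) : Hle (a * b) b := by
  show (a * b) ⇨ b = 1
  rw [Hoop.mul_himp_assoc, Hoop.himp_self, himp_one]

theorem hle_himp_self (a b : H) : Hle b (a ⇨ b) := by
  show b ⇨ (a ⇨ b) = 1
  rw [← Hoop.mul_himp_assoc, mul_comm, Hoop.mul_himp_assoc, Hoop.himp_self, himp_one]

theorem hle_mp (a b : H) : Hle ((a ⇨ b) * a) b := by
  show ((a ⇨ b) * a) ⇨ b = 1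
  rw [Hoop.mul_himp_assoc, Hoop.himp_self]

theorem hle_mul_right {a b : H} (c : H) (h : Hle a b) : Hle (a * c) (b * c) := by
  have h1 : Hle b (c ⇨ (b * c)) := by
    show b ⇨ (c ⇨ (b * c)) = 1
    rw [← Hoop.mul_himp_assoc, Hoop.himp_self]
  have h2 := hle_trans h h1
  show (a * c) ⇨ (b * c) = 1
  rw [Hoop.mul_himp_assoc]
  exact h2

theorem hle_mul {a b c d : H} (h1 : Hle a b) (h2 : Hle c d) : Hle (a * c) (b * d) := by
  have t1 : Hle (a * c) (b * c) := hle_mul_right c h1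
  have t2 : Hle (b * c) (b * d) := by
    rw [mul_comm b c, mul_comm b d]
    exact hle_mul_right b h2
  exact hle_trans t1 t2

theorem himp_hle_himp_left {a b : H} (c : H) (h : Hle a b) : Hle (b ⇨ c) (a ⇨ c) := by
  have hk := K a b c
  rw [h, one_himp] at hk
  exact hk

variable {H' : Type*} [BasicHoop H']

theorem hsplit (a b : H') {m w : H'} (h1 : Hle ((a ⇨ b) * m) w)
    (h2 : Hle ((b ⇨ a) * m) w) : Hle m w := by
  have hb := BasicHoop.basic a b (m ⇨ w)
  have e1 : (a ⇨ b) ⇨ (m ⇨ w) = 1 := by rw [← Hoop.mul_himp_assoc]; exact h1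
  have e2 : (b ⇨ a) ⇨ (m ⇨ w) = 1 := by rw [← Hoop.mul_himp_assoc]; exact h2
  rw [e1, one_himp, e2, one_himp] at hb
  exact hb

theorem apply2 {p t w u p' t' : H} (hu : Hle u (p ⇨ (t ⇨ w))) (hp : Hle p' p)
    (ht : Hle t' t) : Hle ((u * p') * t') w :=
  hle_trans (hle_mul (hle_mul hu hp) ht)
    (hle_trans (hle_mul (hle_mp p (t ⇨ w)) (hle_refl t)) (hle_mp t w))

theorem triple (d u v w : H) : d ⇨ (u ⇨ (v ⇨ w)) = ((d * u) * v) ⇨ w := by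
  rw [Hoop.mul_himp_assoc, Hoop.mul_himp_assoc]

theorem core (a₁ a₂ a₃ x y z : H')
    (hxr : x ⇨ (a₁ ⇨ a₂) = a₁ ⇨ a₂) (hyr : y ⇨ (a₂ ⇨ a₁) = a₂ ⇨ a₁) :
    Hle (((((((a₂ ⇨ a₁) ⇨ a₃) ⇨ a₃) ⇨ ((a₁ ⇨ a₂) ⇨ a₃))
        * ((a₃ ⇨ (a₁ ⇨ a₂)) ⇨ (((a₂ ⇨ a₁) ⇨ (x ⇨ y)) ⇨ z)))
        * ((a₃ ⇨ (a₂ ⇨ a₁)) ⇨ (((a₁ ⇨ a₂) ⇨ (y ⇨ x)) ⇨ z)))) z := by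
  set U := (a₃ ⇨ (a₁ ⇨ a₂)) ⇨ (((a₂ ⇨ a₁) ⇨ (x ⇨ y)) ⇨ z) with hU0
  set V := (a₃ ⇨ (a₂ ⇨ a₁)) ⇨ (((a₁ ⇨ a₂) ⇨ (y ⇨ x)) ⇨ z) with hV0
  set D := (((a₂ ⇨ a₁) ⇨ a₃) ⇨ a₃) ⇨ ((a₁ ⇨ a₂) ⇨ a₃) with hD0
  have hMU : Hle ((D * U) * V) U := hle_trans (mul_hle_left _ _) (mul_hle_right _ _)
  have hMV : Hle ((D * U) * V) V := mul_hle_right _ _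
  have hr₁P : Hle (a₁ ⇨ a₂) (a₃ ⇨ (a₁ ⇨ a₂)) := hle_himp_self _ _
  have hr₂Q : Hle (a₂ ⇨ a₁) (a₃ ⇨ (a₂ ⇨ a₁)) := hle_himp_self _ _
  have hwT₁ : Hle (x ⇨ y) ((a₂ ⇨ a₁) ⇨ (x ⇨ y)) := hle_himp_self _ _
  have hw'T₂ : Hle (y ⇨ x) ((a₁ ⇨ a₂) ⇨ (y ⇨ x)) := hle_himp_self _ _
  have hσQ : Hle ((x ⇨ y) ⇨ (a₂ ⇨ a₁)) (a₃ ⇨ (a₂ ⇨ a₁)) :=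
    hle_trans (hle_trans (himp_hle_himp_left _ (hle_himp_self x y)) (hle_of_eq hyr)) hr₂Q
  have hτP : Hle ((y ⇨ x) ⇨ (a₁ ⇨ a₂)) (a₃ ⇨ (a₁ ⇨ a₂)) :=
    hle_trans (hle_trans (himp_hle_himp_left _ (hle_himp_self y x)) (hle_of_eq hxr)) hr₁P
  refine hsplit a₁ a₂ ?_ ?_
  · refine hsplit (a₂ ⇨ a₁) (x ⇨ y) ?_ ?_
    · refine hle_trans (hle_mul (hle_refl _) (hle_mul (hle_refl _) hMU)) ?_
      refine hle_trans (hle_of_eq (show ((a₂ ⇨ a₁) ⇨ (x ⇨ y)) * ((a₁ ⇨ a₂) * U)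
        = (U * (a₁ ⇨ a₂)) * ((a₂ ⇨ a₁) ⇨ (x ⇨ y)) by ac_rfl)) ?_
      exact apply2 (hle_of_eq hU0) hr₁P (hle_refl _)
    · refine hsplit x y ?_ ?_
      · refine hle_trans (hle_mul (hle_refl _)
          (hle_trans (mul_hle_right _ _) (hle_mul (hle_refl _) hMU))) ?_
        refine hle_trans (hle_of_eq (show (x ⇨ y) * ((a₁ ⇨ a₂) * U)
          = (U * (a₁ ⇨ a₂)) * (x ⇨ y) by ac_rfl)) ?_
        exact apply2 (hle_of_eq hU0) hr₁P hwT₁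
      · refine hle_trans (hle_mul (hle_refl _)
          (hle_mul (hle_refl _) (hle_trans (mul_hle_right _ _) hMV))) ?_
        refine hle_trans (hle_of_eq (show (y ⇨ x) * (((x ⇨ y) ⇨ (a₂ ⇨ a₁)) * V)
          = (V * ((x ⇨ y) ⇨ (a₂ ⇨ a₁))) * (y ⇨ x) by ac_rfl)) ?_
        exact apply2 (hle_of_eq hV0) hσQ hw'T₂
  · refine hsplit (a₁ ⇨ a₂) (y ⇨ x) ?_ ?_
    · refine hle_trans (hle_mul (hle_refl _) (hle_mul (hle_refl _) hMV)) ?_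
      refine hle_trans (hle_of_eq (show ((a₁ ⇨ a₂) ⇨ (y ⇨ x)) * ((a₂ ⇨ a₁) * V)
        = (V * (a₂ ⇨ a₁)) * ((a₁ ⇨ a₂) ⇨ (y ⇨ x)) by ac_rfl)) ?_
      exact apply2 (hle_of_eq hV0) hr₂Q (hle_refl _)
    · refine hsplit x y ?_ ?_
      · refine hle_trans (hle_mul (hle_refl _)
          (hle_mul (hle_refl _) (hle_trans (mul_hle_right _ _) hMU))) ?_
        refine hle_trans (hle_of_eq (show (x ⇨ y) * (((y ⇨ x) ⇨ (a₁ ⇨ a₂)) * U)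
          = (U * ((y ⇨ x) ⇨ (a₁ ⇨ a₂))) * (x ⇨ y) by ac_rfl)) ?_
        exact apply2 (hle_of_eq hU0) hτP hwT₁
      · refine hle_trans (hle_mul (hle_refl _)
          (hle_trans (mul_hle_right _ _) (hle_mul (hle_refl _) hMV))) ?_
        refine hle_trans (hle_of_eq (show (y ⇨ x) * ((a₂ ⇨ a₁) * V)
          = (V * (a₂ ⇨ a₁)) * (y ⇨ x) by ac_rfl)) ?_
        exact apply2 (hle_of_eq hV0) hr₂Q hw'T₂

end StmtAux

/-- For a split epimorphism of basic hoops `p : A → B` with strong section `s` and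
kernel `X = {a | p a = 1}`, the induced action `g_b(x) = s b → x` satisfies
condition (B2). -/
theorem stmt11 {A B : Type*} [BasicHoop A] [BasicHoop B] (p : A → B) (s : B → A)
    (hp1 : p 1 = 1) (hpm : ∀ a a' : A, p (a * a') = p a * p a')
    (hpi : ∀ a a' : A, p (a ⇨ a') = p a ⇨ p a')
    (hs1 : s 1 = 1) (hsm : ∀ b b' : B, s (b * b') = s b * s b')
    (hsi : ∀ b b' : B, s (b ⇨ b') = s b ⇨ s b')
    (hps : ∀ b : B, p (s b) = b)
    (hss : ∀ (a : A) (b : B), a ⇨ s b = s (p a) ⇨ s b) :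
    ∀ (b₁ b₂ b₃ : B) (x y z : A), p x = 1 → p y = 1 → p z = 1 →
      s ((((b₂ ⇨ b₁) ⇨ b₃) ⇨ b₃) ⇨ ((b₁ ⇨ b₂) ⇨ b₃)) ⇨
          ((s (b₃ ⇨ (b₁ ⇨ b₂)) ⇨ ((s (b₂ ⇨ b₁) ⇨ (x ⇨ y)) ⇨ z)) ⇨
            ((s (b₃ ⇨ (b₂ ⇨ b₁)) ⇨ ((s (b₁ ⇨ b₂) ⇨ (y ⇨ x)) ⇨ z)) ⇨ z)) = 1 := by
  intro b₁ b₂ b₃ x y z hx hy hz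
  have hxr : x ⇨ (s b₁ ⇨ s b₂) = s b₁ ⇨ s b₂ := by
    rw [← hsi, hss, hx, hs1, StmtAux.one_himp]
  have hyr : y ⇨ (s b₂ ⇨ s b₁) = s b₂ ⇨ s b₁ := by
    rw [← hsi, hss, hy, hs1, StmtAux.one_himp]
  simp only [hsi]
  exact (StmtAux.triple _ _ _ _).trans
    (StmtAux.core (s b₁) (s b₂) (s b₃) x y z hxr hyr)
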